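/- arXiv:1511.01172 — 4 statements merged into one kernel-verified Lean document; each statement's English description precedes it below -/
import Mathlib

section
/- Let z be a nonzero integer and let π be the group with presentation ⟨a, x, y | xax⁻¹a⁻¹, yay⁻¹a⁻¹, xyx⁻¹y⁻¹a^{−z}⟩. Then the center of π is the infinite cyclic subgroup generated by a. -/
namespace TorusBundleAux

/-! ### General commutation lemmas -/

section KeyLemmas
variable {G : Type*} [Group G] {A X Y : G} {z : ℤ}

lemma key_conj (hAX : Commute A X) (hXY : X * Y * X⁻¹ = A ^ z * Y) (m : ℤ) :
    X ^ m * Y * (X ^ m)⁻¹ = A ^ (z * m) * Y := by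
  induction m using Int.induction_on with
  | zero => simp
  | succ m ih =>
      have hc : Commute (A ^ z) (X ^ (m : ℤ)) := hAX.zpow_zpow z m
      have : X ^ ((m : ℤ) + 1) = X ^ (m : ℤ) * X := zpow_add_one X m
      rw [this, mul_inv_rev]
      calc X ^ (m : ℤ) * X * Y * (X⁻¹ * (X ^ (m : ℤ))⁻¹)
          = X ^ (m : ℤ) * (X * Y * X⁻¹) * (X ^ (m : ℤ))⁻¹ := by group
        _ = X ^ (m : ℤ) * (A ^ z * Y) * (X ^ (m : ℤ))⁻¹ := by rw [hXY]
        _ = A ^ z * (X ^ (m : ℤ) * Y * (X ^ (m : ℤ))⁻¹) := by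
              rw [← mul_assoc, ← mul_assoc, ← hc.eq]; group
        _ = A ^ z * (A ^ (z * m) * Y) := by rw [ih]
        _ = A ^ (z * ((m : ℤ) + 1)) * Y := by rw [← mul_assoc, ← zpow_add]; ring_nf
  | pred m ih =>
      have hinv : X⁻¹ * Y * X = A ^ (-z) * Y := by
        have h : X * (A ^ (-z) * Y) = Y * X := by
          rw [← mul_assoc, ← (hAX.zpow_left (-z)).eq]
          calc A ^ (-z) * X * Y = A ^ (-z) * (X * Y * X⁻¹) * X := by group
            _ = A ^ (-z) * (A ^ z * Y) * X := by rw [hXY]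
            _ = Y * X := by rw [← mul_assoc, ← zpow_add]; simp
        calc X⁻¹ * Y * X = X⁻¹ * (Y * X) := by rw [mul_assoc]
          _ = X⁻¹ * (X * (A ^ (-z) * Y)) := by rw [h]
          _ = A ^ (-z) * Y := by group
      have hc : Commute (A ^ (-z)) (X ^ (-(m : ℤ))) := hAX.zpow_zpow _ _
      have : X ^ (-(m : ℤ) - 1) = X ^ (-(m : ℤ)) * X⁻¹ := by
        rw [zpow_sub_one]
      rw [this, mul_inv_rev, inv_inv]
      calc X ^ (-(m : ℤ)) * X⁻¹ * Y * (X * (X ^ (-(m : ℤ)))⁻¹)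
          = X ^ (-(m : ℤ)) * (X⁻¹ * Y * X) * (X ^ (-(m : ℤ)))⁻¹ := by group
        _ = X ^ (-(m : ℤ)) * (A ^ (-z) * Y) * (X ^ (-(m : ℤ)))⁻¹ := by rw [hinv]
        _ = A ^ (-z) * (X ^ (-(m : ℤ)) * Y * (X ^ (-(m : ℤ)))⁻¹) := by
              rw [← mul_assoc, ← mul_assoc, ← hc.eq]; group
        _ = A ^ (-z) * (A ^ (z * -m) * Y) := by rw [ih]
        _ = A ^ (z * (-(m : ℤ) - 1)) * Y := by rw [← mul_assoc, ← zpow_add]; ring_nf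

lemma key_comm (hAX : Commute A X) (hAY : Commute A Y)
    (hXY : X * Y * X⁻¹ = A ^ z * Y) (m n : ℤ) :
    X ^ m * Y ^ n = A ^ (z * m * n) * (Y ^ n * X ^ m) := by
  have h1 : X ^ m * Y ^ n * (X ^ m)⁻¹ = A ^ (z * m * n) * Y ^ n := by
    calc X ^ m * Y ^ n * (X ^ m)⁻¹ = (X ^ m * Y * (X ^ m)⁻¹) ^ n := by
          rw [conj_zpow]
      _ = (A ^ (z * m) * Y) ^ n := by rw [key_conj hAX hXY]
      _ = (A ^ (z * m)) ^ n * Y ^ n := (hAY.zpow_left (z * m)).mul_zpow n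
      _ = A ^ (z * m * n) * Y ^ n := by rw [← zpow_mul]
  calc X ^ m * Y ^ n = X ^ m * Y ^ n * (X ^ m)⁻¹ * X ^ m := by group
    _ = A ^ (z * m * n) * Y ^ n * X ^ m := by rw [h1]
    _ = A ^ (z * m * n) * (Y ^ n * X ^ m) := by rw [mul_assoc]

lemma normal_mul (hAX : Commute A X) (hAY : Commute A Y)
    (hXY : X * Y * X⁻¹ = A ^ z * Y) (k m n k' m' n' : ℤ) :
    (A ^ k * X ^ m * Y ^ n) * (A ^ k' * X ^ m' * Y ^ n') =
      A ^ (k + k' - z * n * m') * X ^ (m + m') * Y ^ (n + n') := by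
  have sYX : ∀ s t : ℤ, Y ^ s * X ^ t = A ^ (-(z * t * s)) * (X ^ t * Y ^ s) := by
    intro s t
    rw [key_comm hAX hAY hXY t s, ← mul_assoc, ← zpow_add]
    simp
  have sYXw : ∀ s t : ℤ, ∀ w : G,
      Y ^ s * (X ^ t * w) = A ^ (-(z * t * s)) * (X ^ t * (Y ^ s * w)) := by
    intro s t w
    rw [← mul_assoc, sYX s t]; group
  have sXA : ∀ s t : ℤ, X ^ t * A ^ s = A ^ s * X ^ t :=
    fun s t => ((hAX.zpow_zpow s t).eq).symm
  have sXAw : ∀ s t : ℤ, ∀ w : G, X ^ t * (A ^ s * w) = A ^ s * (X ^ t * w) := by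
    intro s t w; rw [← mul_assoc, sXA, mul_assoc]
  have sYA : ∀ s t : ℤ, Y ^ t * A ^ s = A ^ s * Y ^ t :=
    fun s t => ((hAY.zpow_zpow s t).eq).symm
  have sYAw : ∀ s t : ℤ, ∀ w : G, Y ^ t * (A ^ s * w) = A ^ s * (Y ^ t * w) := by
    intro s t w; rw [← mul_assoc, sYA, mul_assoc]
  have mA : ∀ s t : ℤ, A ^ s * A ^ t = A ^ (s + t) := fun s t => (zpow_add A s t).symm
  have mAw : ∀ s t : ℤ, ∀ w : G, A ^ s * (A ^ t * w) = A ^ (s + t) * w := by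
    intro s t w; rw [← mul_assoc, mA]
  have mX : ∀ s t : ℤ, X ^ s * X ^ t = X ^ (s + t) := fun s t => (zpow_add X s t).symm
  have mXw : ∀ s t : ℤ, ∀ w : G, X ^ s * (X ^ t * w) = X ^ (s + t) * w := by
    intro s t w; rw [← mul_assoc, mX]
  have mY : ∀ s t : ℤ, Y ^ s * Y ^ t = Y ^ (s + t) := fun s t => (zpow_add Y s t).symm
  simp only [mul_assoc, sYXw, sYX, sXAw, sXA, sYAw, sYA, mAw, mA, mXw, mX, mY]
  ring_nf

end KeyLemmas

/-! ### The model group -/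

/-- Model of the torus-bundle group: triples `(k, m, n)` representing `a^k x^m y^n`. -/
@[ext] structure Heis (z : ℤ) where
  k : ℤ
  m : ℤ
  n : ℤ

namespace Heis
variable {z : ℤ}
instance : Mul (Heis z) :=
  ⟨fun g h => ⟨g.k + h.k - z * g.n * h.m, g.m + h.m, g.n + h.n⟩⟩
instance : One (Heis z) := ⟨⟨0, 0, 0⟩⟩
instance : Inv (Heis z) := ⟨fun g => ⟨-g.k - z * g.n * g.m, -g.m, -g.n⟩⟩
@[simp] lemma mul_k (g h : Heis z) : (g * h).k = g.k + h.k - z * g.n * h.m := rfl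
@[simp] lemma mul_m (g h : Heis z) : (g * h).m = g.m + h.m := rfl
@[simp] lemma mul_n (g h : Heis z) : (g * h).n = g.n + h.n := rfl
@[simp] lemma one_k : (1 : Heis z).k = 0 := rfl
@[simp] lemma one_m : (1 : Heis z).m = 0 := rfl
@[simp] lemma one_n : (1 : Heis z).n = 0 := rfl
@[simp] lemma inv_k (g : Heis z) : g⁻¹.k = -g.k - z * g.n * g.m := rfl
@[simp] lemma inv_m (g : Heis z) : g⁻¹.m = -g.m := rfl
@[simp] lemma inv_n (g : Heis z) : g⁻¹.n = -g.n := rfl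
instance : Group (Heis z) where
  mul_assoc a b c := by ext <;> simp <;> ring
  one_mul a := by ext <;> simp
  mul_one a := by ext <;> simp
  inv_mul_cancel a := by ext <;> simp <;> ring
lemma a_zpow (t : ℤ) : (⟨1, 0, 0⟩ : Heis z) ^ t = ⟨t, 0, 0⟩ := by
  induction t using Int.induction_on with
  | zero => rfl
  | succ m ih => rw [zpow_add_one, ih]; ext <;> simp
  | pred m ih => rw [zpow_sub_one, ih]; ext <;> simp <;> ring
lemma a_pow (t : ℕ) : (⟨1, 0, 0⟩ : Heis z) ^ t = ⟨(t : ℤ), 0, 0⟩ := by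
  rw [← zpow_natCast, a_zpow]
end Heis

end TorusBundleAux

open TorusBundleAux

/-- The relators of the presentation
`⟨a, x, y | xax⁻¹a⁻¹, yay⁻¹a⁻¹, xyx⁻¹y⁻¹a^{-z}⟩`, where the generators
`a, x, y` correspond to `0, 1, 2 : Fin 3`. -/
def torusBundleRels (z : ℤ) : Set (FreeGroup (Fin 3)) :=
  { FreeGroup.of 1 * FreeGroup.of 0 * (FreeGroup.of 1)⁻¹ * (FreeGroup.of 0)⁻¹,
    FreeGroup.of 2 * FreeGroup.of 0 * (FreeGroup.of 2)⁻¹ * (FreeGroup.of 0)⁻¹,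
    FreeGroup.of 1 * FreeGroup.of 2 * (FreeGroup.of 1)⁻¹ * (FreeGroup.of 2)⁻¹ *
      FreeGroup.of 0 ^ (-z) }

namespace TorusBundleAux

variable {z : ℤ}

lemma rel_eq_one {r : FreeGroup (Fin 3)} (hr : r ∈ torusBundleRels z) :
    PresentedGroup.mk (torusBundleRels z) r = 1 :=
  (QuotientGroup.eq_one_iff r).mpr (Subgroup.subset_normalClosure hr)

lemma mk_of (i : Fin 3) :
    PresentedGroup.mk (torusBundleRels z) (FreeGroup.of i) =
      PresentedGroup.of (rels := torusBundleRels z) i := rfl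

local notation "A" => (PresentedGroup.of (rels := torusBundleRels z) 0)
local notation "X" => (PresentedGroup.of (rels := torusBundleRels z) 1)
local notation "Y" => (PresentedGroup.of (rels := torusBundleRels z) 2)

lemma hAX : Commute (A) (X) := by
  have h := rel_eq_one (z := z) (Set.mem_insert _ _)
  simp only [map_mul, map_inv, mk_of] at h
  have h1 : (X) * (A) * (X)⁻¹ = A := mul_inv_eq_one.mp h
  exact (mul_inv_eq_iff_eq_mul.mp h1).symm

lemma hAY : Commute (A) (Y) := by
  have h := rel_eq_one (z := z) (Set.mem_insert_of_mem _ (Set.mem_insert _ _))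
  simp only [map_mul, map_inv, mk_of] at h
  have h1 : (Y) * (A) * (Y)⁻¹ = A := mul_inv_eq_one.mp h
  exact (mul_inv_eq_iff_eq_mul.mp h1).symm

lemma hXY : (X) * (Y) * (X)⁻¹ = (A) ^ z * (Y) := by
  have h := rel_eq_one (z := z)
    (Set.mem_insert_of_mem _ (Set.mem_insert_of_mem _ rfl))
  simp only [map_mul, map_inv, map_zpow, mk_of] at h
  have h1 : (X) * (Y) * (X)⁻¹ * (Y)⁻¹ = (A) ^ z := by
    rw [mul_eq_one_iff_eq_inv] at h
    rw [h, ← zpow_neg, neg_neg]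
  exact mul_inv_eq_iff_eq_mul.mp h1

/-- The generator images in the model group. -/
def fgen : Fin 3 → Heis z := fun i =>
  match i with
  | 0 => ⟨1, 0, 0⟩
  | 1 => ⟨0, 1, 0⟩
  | 2 => ⟨0, 0, 1⟩

lemma frels : ∀ r ∈ torusBundleRels z, FreeGroup.lift (fgen (z := z)) r = 1 := by
  rintro r (rfl | rfl | rfl) <;>
    simp only [map_mul, map_inv, map_zpow, FreeGroup.lift_apply_of, fgen, Heis.a_zpow] <;>
    (ext <;> simp <;> ring)

/-- The homomorphism to the model group. -/
def φ : PresentedGroup (torusBundleRels z) →* Heis z :=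
  PresentedGroup.toGroup frels

@[simp] lemma φ_A : φ (z := z) (A) = ⟨1, 0, 0⟩ := PresentedGroup.toGroup.of frels
@[simp] lemma φ_X : φ (z := z) (X) = ⟨0, 1, 0⟩ := PresentedGroup.toGroup.of frels
@[simp] lemma φ_Y : φ (z := z) (Y) = ⟨0, 0, 1⟩ := PresentedGroup.toGroup.of frels

/-- The homomorphism from the model group (normal form map). -/
def ψ : Heis z →* PresentedGroup (torusBundleRels z) where
  toFun g := (A) ^ g.k * (X) ^ g.m * (Y) ^ g.n
  map_one' := by simp
  map_mul' g h := (normal_mul hAX hAY hXY g.k g.m g.n h.k h.m h.n).symm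

@[simp] lemma ψ_apply (g : Heis z) :
    ψ g = (A) ^ g.k * (X) ^ g.m * (Y) ^ g.n := rfl

lemma ψφ (g : PresentedGroup (torusBundleRels z)) : ψ (φ g) = g := by
  have h : (ψ (z := z)).comp φ = MonoidHom.id _ := by
    apply PresentedGroup.ext
    intro i
    fin_cases i <;> simp [φ, fgen, PresentedGroup.toGroup.of]
  calc ψ (φ g) = ((ψ (z := z)).comp φ) g := rfl
    _ = g := by rw [h]; rfl

lemma φ_injective : Function.Injective (φ (z := z)) :=
  Function.LeftInverse.injective ψφ

lemma A_commutes (g : PresentedGroup (torusBundleRels z)) : Commute (A) g := by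
  rw [← ψφ g, ψ_apply]
  exact (((Commute.refl (A)).zpow_right _).mul_right (hAX.zpow_right _)).mul_right
    (hAY.zpow_right _)

end TorusBundleAux

/-- For `z ≠ 0`, the center of `π = ⟨a, x, y | xax⁻¹a⁻¹, yay⁻¹a⁻¹, xyx⁻¹y⁻¹a^{-z}⟩`
is the infinite cyclic subgroup generated by `a`. -/
theorem center_of_torusBundleGroup (z : ℤ) (hz : z ≠ 0) :
    Subgroup.center (PresentedGroup (torusBundleRels z)) =
      Subgroup.zpowers (PresentedGroup.of (rels := torusBundleRels z) 0)
    ∧ ¬ IsOfFinOrder (PresentedGroup.of (rels := torusBundleRels z) 0) := by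
  constructor
  · apply le_antisymm
    · intro g hg
      have hgX := (Subgroup.mem_center_iff.mp hg) (PresentedGroup.of 1)
      have hgY := (Subgroup.mem_center_iff.mp hg) (PresentedGroup.of 2)
      have hX := congrArg (φ (z := z)) hgX
      have hY := congrArg (φ (z := z)) hgY
      simp only [map_mul, φ_X, φ_Y] at hX hY
      -- extract components
      have hn : (φ g).n = 0 := by
        have h0 := congrArg Heis.k hX
        simp only [Heis.mul_k] at h0
        have h1 : z * (φ g).n = 0 := by linarith
        exact (mul_eq_zero.mp h1).resolve_left hz
      have hm : (φ g).m = 0 := by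
        have h0 := congrArg Heis.k hY
        simp only [Heis.mul_k] at h0
        have h1 : z * (φ g).m = 0 := by linarith
        exact (mul_eq_zero.mp h1).resolve_left hz
      have : φ g = φ ((PresentedGroup.of (rels := torusBundleRels z) 0) ^ (φ g).k) := by
        rw [map_zpow, φ_A, Heis.a_zpow]
        ext <;> simp [hm, hn]
      exact ⟨(φ g).k, (φ_injective this).symm⟩
    · rw [Subgroup.zpowers_le]
      rw [Subgroup.mem_center_iff]
      intro g
      exact (A_commutes g).symm.eq
  · intro hfin
    obtain ⟨n, hn, hpow⟩ := isOfFinOrder_iff_pow_eq_one.mp hfin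
    have := congrArg (φ (z := z)) hpow
    rw [map_pow, φ_A, Heis.a_pow, map_one] at this
    have := congrArg Heis.k this
    simp at this
    omega
end

section
/- Let z ≠ 0 and let π be the central extension of Z² by Z with extension class z, presented as ⟨a, x, y | [x,a], [y,a], [x,y]a^{−z}⟩. Then the natural homomorphism Aut(π) → GL₂(Z), induced by the action of automorphisms on π/Z(π) ≅ Z², is surjective. -/
set_option maxRecDepth 10000


section MonoidCalc

variable {H : Type*} [Group H]

private lemma meq (c x y : H) {k1 k2 a1 a2 b1 b2 : ℤ} (h1 : k1 = k2) (h2 : a1 = a2)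
    (h3 : b1 = b2) : c ^ k1 * (x ^ a1 * y ^ b1) = c ^ k2 * (x ^ a2 * y ^ b2) := by
  subst h1; subst h2; subst h3; rfl

variable {c x y : H}

private lemma conj_x (hc : ∀ g : H, Commute c g) (hyx : y * x = c * (x * y)) (q : ℤ) :
    y ^ q * x * (y ^ q)⁻¹ = c ^ q * x := by
  have base : y * x * y⁻¹ = c * x := by
    rw [hyx, mul_assoc, mul_inv_cancel_right]
  have baseneg : y⁻¹ * x * y = c⁻¹ * x := by
    have h0 : x * y = c⁻¹ * (y * x) := by rw [hyx, ← mul_assoc, inv_mul_cancel, one_mul]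
    calc y⁻¹ * x * y = y⁻¹ * (x * y) := by rw [mul_assoc]
      _ = y⁻¹ * (c⁻¹ * (y * x)) := by rw [h0]
      _ = c⁻¹ * x := by
          rw [← mul_assoc, ← ((hc y⁻¹).inv_left.eq)]; group
  induction q using Int.induction_on with
  | zero => simp
  | succ n ih =>
    have hy : y ^ ((n : ℤ) + 1) = y * y ^ (n : ℤ) := by rw [add_comm, zpow_add, zpow_one]
    rw [hy, mul_inv_rev]
    calc y * y ^ (n : ℤ) * x * ((y ^ (n : ℤ))⁻¹ * y⁻¹)
        = y * (y ^ (n : ℤ) * x * (y ^ (n : ℤ))⁻¹) * y⁻¹ := by group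
      _ = y * (c ^ (n : ℤ) * x) * y⁻¹ := by rw [ih]
      _ = c ^ (n : ℤ) * (y * x * y⁻¹) := by
          rw [← mul_assoc, ← mul_assoc, ← ((hc y).zpow_left (n : ℤ)).eq]; group
      _ = c ^ (n : ℤ) * (c * x) := by rw [base]
      _ = c ^ ((n : ℤ) + 1) * x := by rw [zpow_add_one, ← mul_assoc]
  | pred n ih =>
    have hy : y ^ (-(n : ℤ) - 1) = y⁻¹ * y ^ (-(n : ℤ)) := by
      rw [sub_eq_add_neg, add_comm, zpow_add, zpow_neg_one]
    rw [hy, mul_inv_rev]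
    calc y⁻¹ * y ^ (-(n : ℤ)) * x * ((y ^ (-(n : ℤ)))⁻¹ * y⁻¹⁻¹)
        = y⁻¹ * (y ^ (-(n : ℤ)) * x * (y ^ (-(n : ℤ)))⁻¹) * y⁻¹⁻¹ := by group
      _ = y⁻¹ * (c ^ (-(n : ℤ)) * x) * y := by rw [ih, inv_inv]
      _ = c ^ (-(n : ℤ)) * (y⁻¹ * x * y) := by
          rw [← mul_assoc, ← mul_assoc, ← ((hc y⁻¹).zpow_left (-(n : ℤ))).eq]; group
      _ = c ^ (-(n : ℤ)) * (c⁻¹ * x) := by rw [baseneg]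
      _ = c ^ (-(n : ℤ) - 1) * x := by rw [zpow_sub_one, ← mul_assoc]

private lemma swap (hc : ∀ g : H, Commute c g) (hyx : y * x = c * (x * y)) (q p : ℤ) :
    y ^ q * x ^ p = c ^ (p * q) * (x ^ p * y ^ q) := by
  have h1 : y ^ q * x ^ p * (y ^ q)⁻¹ = c ^ (p * q) * x ^ p := by
    calc y ^ q * x ^ p * (y ^ q)⁻¹ = (y ^ q * x * (y ^ q)⁻¹) ^ p := by rw [conj_zpow]
      _ = (c ^ q * x) ^ p := by rw [conj_x hc hyx]
      _ = (c ^ q) ^ p * x ^ p := ((hc x).zpow_left q).mul_zpow p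
      _ = c ^ (p * q) * x ^ p := by rw [← zpow_mul, mul_comm q p]
  have h2 := mul_inv_eq_iff_eq_mul.mp h1
  rw [h2, mul_assoc]

private lemma cmx (hc : ∀ g : H, Commute c g) (k p : ℤ) (t : H) :
    x ^ p * (c ^ k * t) = c ^ k * (x ^ p * t) := by
  rw [← mul_assoc, ((hc (x ^ p)).zpow_left k).eq.symm, mul_assoc]
private lemma cmx' (hc : ∀ g : H, Commute c g) (k p : ℤ) : x ^ p * c ^ k = c ^ k * x ^ p :=
  ((hc (x ^ p)).zpow_left k).eq.symm
private lemma cmy (hc : ∀ g : H, Commute c g) (k q : ℤ) (t : H) :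
    y ^ q * (c ^ k * t) = c ^ k * (y ^ q * t) := by
  rw [← mul_assoc, ((hc (y ^ q)).zpow_left k).eq.symm, mul_assoc]
private lemma cmy' (hc : ∀ g : H, Commute c g) (k q : ℤ) : y ^ q * c ^ k = c ^ k * y ^ q :=
  ((hc (y ^ q)).zpow_left k).eq.symm
private lemma sw' (hc : ∀ g : H, Commute c g) (hyx : y * x = c * (x * y)) (q p : ℤ) (t : H) :
    y ^ q * (x ^ p * t) = c ^ (p * q) * (x ^ p * (y ^ q * t)) := by
  rw [← mul_assoc, swap hc hyx, mul_assoc, mul_assoc]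
private lemma pm' (g : H) (a b : ℤ) (t : H) : g ^ a * (g ^ b * t) = g ^ (a + b) * t := by
  rw [← mul_assoc, ← zpow_add]
private lemma pm (g : H) (a b : ℤ) : g ^ a * g ^ b = g ^ (a + b) := (zpow_add g a b).symm
private lemma pinv (g : H) (p : ℤ) : (g ^ p)⁻¹ = g ^ (-p) := (zpow_neg g p).symm

private lemma Lmul (hc : ∀ g : H, Commute c g) (hyx : y * x = c * (x * y)) (k l p q p' q' : ℤ) :
    (c ^ k * (x ^ p * y ^ q)) * (c ^ l * (x ^ p' * y ^ q')) =
      c ^ (k + l + p' * q) * (x ^ (p + p') * y ^ (q + q')) := by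
  simp only [mul_assoc, cmx (x := x) hc, cmy (y := y) hc, cmx' (x := x) hc,
    cmy' (y := y) hc, sw' hc hyx, swap hc hyx, pm', pm]
  exact meq c x y (by ring) (by ring) (by ring)

private lemma Linv (hc : ∀ g : H, Commute c g) (hyx : y * x = c * (x * y)) (k p q : ℤ) :
    (c ^ k * (x ^ p * y ^ q))⁻¹ = c ^ (p * q - k) * (x ^ (-p) * y ^ (-q)) := by
  simp only [mul_inv_rev, pinv, mul_assoc, cmx (x := x) hc, cmy (y := y) hc,
    cmx' (x := x) hc, cmy' (y := y) hc, sw' hc hyx, swap hc hyx, pm', pm]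
  exact meq c x y (by ring) (by ring) (by ring)

private lemma Lpow (hc : ∀ g : H, Commute c g) (hyx : y * x = c * (x * y)) (k p q : ℤ)
    (n : ℤ) :
    ∃ e : ℤ, (c ^ k * (x ^ p * y ^ q)) ^ n = c ^ e * (x ^ (p * n) * y ^ (q * n)) := by
  induction n using Int.induction_on with
  | zero => exact ⟨0, by simp⟩
  | succ n ih =>
    obtain ⟨e, he⟩ := ih
    refine ⟨e + k + p * (q * n), ?_⟩
    rw [zpow_add_one, he, Lmul hc hyx]
    exact meq c x y (by ring) (by ring) (by ring)
  | pred n ih =>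
    obtain ⟨e, he⟩ := ih
    refine ⟨e + (p * q - k) + (-p) * (q * (-n)), ?_⟩
    rw [zpow_sub_one, he, Linv hc hyx, Lmul hc hyx]
    exact meq c x y (by ring) (by ring) (by ring)

private lemma Lcomm (hc : ∀ g : H, Commute c g) (hyx : y * x = c * (x * y)) (k l p q r s : ℤ) :
    (c ^ k * (x ^ p * y ^ q)) * (c ^ l * (x ^ r * y ^ s)) * (c ^ k * (x ^ p * y ^ q))⁻¹ *
      (c ^ l * (x ^ r * y ^ s))⁻¹ = c ^ (q * r - p * s) := by
  rw [Linv hc hyx, Linv hc hyx, Lmul hc hyx, Lmul hc hyx, Lmul hc hyx]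
  have h1 : (c : H) ^ (q * r - p * s) * (x ^ (0:ℤ) * y ^ (0:ℤ)) = c ^ (q * r - p * s) := by simp
  rw [← h1]
  exact meq c x y (by ring) (by ring) (by ring)

end MonoidCalc

section TorusAux

variable (z : ℤ)

private abbrev GG := PresentedGroup (torusBundleRels z)

private def Ag : GG z := PresentedGroup.of 0
private def Xg : GG z := PresentedGroup.of 1
private def Yg : GG z := PresentedGroup.of 2
private def cg : GG z := Ag z ^ (-z)

private lemma mk_of (i : Fin 3) :
    PresentedGroup.mk (torusBundleRels z) (FreeGroup.of i) = PresentedGroup.of i := rfl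

private lemma relz {r : FreeGroup (Fin 3)} (hr : r ∈ torusBundleRels z) :
    PresentedGroup.mk (torusBundleRels z) r = 1 :=
  (QuotientGroup.eq_one_iff r).mpr (Subgroup.subset_normalClosure hr)

private lemma comm10 : Xg z * Ag z = Ag z * Xg z := by
  have h := relz z (show _ ∈ torusBundleRels z from Set.mem_insert _ _)
  simp only [map_mul, map_inv, mk_of] at h
  have h2 := mul_inv_eq_one.mp h
  exact mul_inv_eq_iff_eq_mul.mp h2

private lemma comm20 : Yg z * Ag z = Ag z * Yg z := by
  have h := relz z (show _ ∈ torusBundleRels z from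
    Set.mem_insert_of_mem _ (Set.mem_insert _ _))
  simp only [map_mul, map_inv, mk_of] at h
  have h2 := mul_inv_eq_one.mp h
  exact mul_inv_eq_iff_eq_mul.mp h2

private lemma commA (g : GG z) : Commute (Ag z) g := by
  have hg : g ∈ Subgroup.centralizer {(Ag z : GG z)} := by
    refine PresentedGroup.generated_by _ _ (fun j => Subgroup.mem_centralizer_iff.mpr ?_) g
    intro h hh
    rcases hh with rfl
    fin_cases j
    · rfl
    · exact (comm10 z).symm
    · exact (comm20 z).symm
  exact Subgroup.mem_centralizer_iff.mp hg (Ag z) rfl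

private lemma hcg : ∀ g : GG z, Commute (cg z) g := fun g => (commA z g).zpow_left (-z)

private lemma hyxg : Yg z * Xg z = cg z * (Xg z * Yg z) := by
  have h := relz z (show _ ∈ torusBundleRels z from
    Set.mem_insert_of_mem _ (Set.mem_insert_of_mem _ rfl))
  simp only [map_mul, map_inv, map_zpow, mk_of] at h
  have h2 : Xg z * Yg z * (Xg z)⁻¹ * (Yg z)⁻¹ = ((Ag z) ^ (-z))⁻¹ :=
    mul_eq_one_iff_eq_inv.mp h
  have h3 := mul_inv_eq_iff_eq_mul.mp h2
  have h4 := mul_inv_eq_iff_eq_mul.mp h3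
  rw [show cg z = Ag z ^ (-z) from rfl, h4]
  group

private lemma exists_hom (ε p q r s k l : ℤ) (h : p * s - q * r = ε) :
    ∃ Φ : GG z →* GG z,
      Φ (Ag z) = Ag z ^ ε ∧
      Φ (Xg z) = cg z ^ k * (Xg z ^ p * Yg z ^ q) ∧
      Φ (Yg z) = cg z ^ l * (Xg z ^ r * Yg z ^ s) := by
  have hc := hcg z
  have hyx := hyxg z
  let f : Fin 3 → GG z :=
    ![Ag z ^ ε, cg z ^ k * (Xg z ^ p * Yg z ^ q), cg z ^ l * (Xg z ^ r * Yg z ^ s)]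
  have hf0 : f 0 = Ag z ^ ε := rfl
  have hf1 : f 1 = cg z ^ k * (Xg z ^ p * Yg z ^ q) := rfl
  have hf2 : f 2 = cg z ^ l * (Xg z ^ r * Yg z ^ s) := rfl
  have hrels : ∀ w ∈ torusBundleRels z, FreeGroup.lift f w = 1 := by
    intro w hw
    simp only [torusBundleRels, Set.mem_insert_iff, Set.mem_singleton_iff] at hw
    rcases hw with rfl | rfl | rfl
    · simp only [map_mul, map_inv, FreeGroup.lift_apply_of, hf0, hf1]
      have hcomm : cg z ^ k * (Xg z ^ p * Yg z ^ q) * Ag z ^ ε =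
          Ag z ^ ε * (cg z ^ k * (Xg z ^ p * Yg z ^ q)) :=
        ((commA z _).zpow_left ε).eq.symm
      rw [hcomm]; group
    · simp only [map_mul, map_inv, FreeGroup.lift_apply_of, hf0, hf2]
      have hcomm : cg z ^ l * (Xg z ^ r * Yg z ^ s) * Ag z ^ ε =
          Ag z ^ ε * (cg z ^ l * (Xg z ^ r * Yg z ^ s)) :=
        ((commA z _).zpow_left ε).eq.symm
      rw [hcomm]; group
    · simp only [map_mul, map_inv, map_zpow, FreeGroup.lift_apply_of, hf0, hf1, hf2]
      rw [Lcomm hc hyx]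
      have h1 : ((Ag z) ^ ε) ^ (-z) = cg z ^ ε := by
        rw [show cg z = Ag z ^ (-z) from rfl, ← zpow_mul, ← zpow_mul, mul_comm]
      rw [h1, ← zpow_add]
      have h2 : q * r - p * s + ε = 0 := by rw [← h]; ring
      rw [h2, zpow_zero]
  exact ⟨PresentedGroup.toGroup hrels,
    by show PresentedGroup.toGroup hrels (PresentedGroup.of 0) = _;
       rw [PresentedGroup.toGroup.of]; exact hf0,
    by show PresentedGroup.toGroup hrels (PresentedGroup.of 1) = _;
       rw [PresentedGroup.toGroup.of]; exact hf1,
    by show PresentedGroup.toGroup hrels (PresentedGroup.of 2) = _;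
       rw [PresentedGroup.toGroup.of]; exact hf2⟩

private lemma exists_right_inverse (ε : ℤ) (hε : ε * ε = 1) (p q r s k l : ℤ)
    (h : p * s - q * r = ε) (Φ : GG z →* GG z)
    (hΦ0 : Φ (Ag z) = Ag z ^ ε)
    (hΦ1 : Φ (Xg z) = cg z ^ k * (Xg z ^ p * Yg z ^ q))
    (hΦ2 : Φ (Yg z) = cg z ^ l * (Xg z ^ r * Yg z ^ s)) :
    ∃ (p' q' r' s' k' l' : ℤ) (Ψ : GG z →* GG z),
      p' * s' - q' * r' = ε ∧
      Ψ (Ag z) = Ag z ^ ε ∧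
      Ψ (Xg z) = cg z ^ k' * (Xg z ^ p' * Yg z ^ q') ∧
      Ψ (Yg z) = cg z ^ l' * (Xg z ^ r' * Yg z ^ s') ∧
      Φ.comp Ψ = MonoidHom.id (GG z) := by
  have hc := hcg z
  have hyx := hyxg z
  have hΦc : Φ (cg z) = cg z ^ ε := by
    rw [show cg z = Ag z ^ (-z) from rfl, map_zpow, hΦ0, ← zpow_mul, ← zpow_mul, mul_comm]
  have h' : (ε * s) * (ε * p) - (-(ε * q)) * (-(ε * r)) = ε := by
    have e : (ε * s) * (ε * p) - (-(ε * q)) * (-(ε * r)) = ε * ε * (p * s - q * r) := by ring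
    rw [e, h, hε, one_mul]
  obtain ⟨e1, he1⟩ := Lpow hc hyx k p q (ε * s)
  obtain ⟨e2, he2⟩ := Lpow hc hyx l r s (-(ε * q))
  obtain ⟨e3, he3⟩ := Lpow hc hyx k p q (-(ε * r))
  obtain ⟨e4, he4⟩ := Lpow hc hyx l r s (ε * p)
  obtain ⟨Ψ, hΨ0, hΨ1, hΨ2⟩ := exists_hom z ε (ε * s) (-(ε * q)) (-(ε * r)) (ε * p)
    (-(ε * (e1 + e2 + r * -(ε * q) * (q * (ε * s)))))
    (-(ε * (e3 + e4 + r * (ε * p) * (q * -(ε * r))))) h'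
  refine ⟨ε * s, -(ε * q), -(ε * r), ε * p,
    -(ε * (e1 + e2 + r * -(ε * q) * (q * (ε * s)))),
    -(ε * (e3 + e4 + r * (ε * p) * (q * -(ε * r)))), Ψ, h', hΨ0, hΨ1, hΨ2, ?_⟩
  refine PresentedGroup.ext fun i => ?_
  fin_cases i
  · show Φ (Ψ (Ag z)) = PresentedGroup.of 0
    rw [hΨ0, map_zpow, hΦ0, ← zpow_mul, hε, zpow_one]
    rfl
  · show Φ (Ψ (Xg z)) = PresentedGroup.of 1
    rw [hΨ1, map_mul, map_zpow, hΦc, map_mul, map_zpow, map_zpow, hΦ1, hΦ2, he1, he2,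
      Lmul hc hyx, ← zpow_mul, pm' (cg z)]
    rw [show ε * -(ε * (e1 + e2 + r * -(ε * q) * (q * (ε * s)))) +
        (e1 + e2 + r * -(ε * q) * (q * (ε * s))) =
        (1 - ε * ε) * (e1 + e2 + r * -(ε * q) * (q * (ε * s))) from by ring,
      hε, sub_self, zero_mul, zpow_zero, one_mul]
    rw [show p * (ε * s) + r * -(ε * q) = ε * (p * s - q * r) from by ring, h, hε]
    rw [show q * (ε * s) + s * -(ε * q) = 0 from by ring]
    rw [zpow_one, zpow_zero, mul_one]
    rfl
  · show Φ (Ψ (Yg z)) = PresentedGroup.of 2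
    rw [hΨ2, map_mul, map_zpow, hΦc, map_mul, map_zpow, map_zpow, hΦ1, hΦ2, he3, he4,
      Lmul hc hyx, ← zpow_mul, pm' (cg z)]
    rw [show ε * -(ε * (e3 + e4 + r * (ε * p) * (q * -(ε * r)))) +
        (e3 + e4 + r * (ε * p) * (q * -(ε * r))) =
        (1 - ε * ε) * (e3 + e4 + r * (ε * p) * (q * -(ε * r))) from by ring,
      hε, sub_self, zero_mul, zpow_zero, one_mul]
    rw [show p * -(ε * r) + r * (ε * p) = 0 from by ring]
    rw [show q * -(ε * r) + s * (ε * p) = ε * (p * s - q * r) from by ring, h, hε]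
    rw [zpow_one, zpow_zero, one_mul]
    rfl

end TorusAux

/-- For `z ≠ 0` and `π = ⟨a, x, y | [x,a], [y,a], [x,y]a^{-z}⟩`, the natural map
`Aut(π) → GL₂(ℤ)` is surjective: for every invertible integral `2 × 2` matrix `M`
there is an automorphism `θ` of `π` which, modulo the central subgroup `⟨a⟩ = Z(π)`,
sends the class of `x` to `x^{M₀₀} y^{M₀₁}` and the class of `y` to `x^{M₁₀} y^{M₁₁}`;
that is, `θ` induces `M` on `π/Z(π) ≅ ℤ²`. -/
theorem aut_to_GL2_surjective (z : ℤ) (hz : z ≠ 0)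
    (M : Matrix (Fin 2) (Fin 2) ℤ) (hM : IsUnit M.det) :
    ∃ θ : PresentedGroup (torusBundleRels z) ≃* PresentedGroup (torusBundleRels z),
      θ (PresentedGroup.of 1) *
          ((PresentedGroup.of (rels := torusBundleRels z) 1) ^ (M 0 0) *
            (PresentedGroup.of (rels := torusBundleRels z) 2) ^ (M 0 1))⁻¹
        ∈ Subgroup.zpowers (PresentedGroup.of (rels := torusBundleRels z) 0) ∧
      θ (PresentedGroup.of 2) *
          ((PresentedGroup.of (rels := torusBundleRels z) 1) ^ (M 1 0) *
            (PresentedGroup.of (rels := torusBundleRels z) 2) ^ (M 1 1))⁻¹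
        ∈ Subgroup.zpowers (PresentedGroup.of (rels := torusBundleRels z) 0) := by
  have hε : M.det * M.det = 1 := by
    rcases Int.isUnit_iff.mp hM with h | h <;> rw [h] <;> norm_num
  have hdet : M 0 0 * M 1 1 - M 0 1 * M 1 0 = M.det := (Matrix.det_fin_two M).symm
  obtain ⟨Φ, hΦ0, hΦ1, hΦ2⟩ :=
    exists_hom z M.det (M 0 0) (M 0 1) (M 1 0) (M 1 1) 0 0 hdet
  obtain ⟨p', q', r', s', k', l', Ψ, h', hΨ0, hΨ1, hΨ2, hΦΨ⟩ :=
    exists_right_inverse z M.det hε (M 0 0) (M 0 1) (M 1 0) (M 1 1) 0 0 hdet Φ hΦ0 hΦ1 hΦ2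
  obtain ⟨_, _, _, _, _, _, χ, _, _, _, _, hΨχ⟩ :=
    exists_right_inverse z M.det hε p' q' r' s' k' l' h' Ψ hΨ0 hΨ1 hΨ2
  have hΦχ : Φ = χ := by
    calc Φ = Φ.comp (Ψ.comp χ) := by rw [hΨχ, MonoidHom.comp_id]
      _ = (Φ.comp Ψ).comp χ := (MonoidHom.comp_assoc _ _ _).symm
      _ = χ := by rw [hΦΨ, MonoidHom.id_comp]
  have hΨΦ : Ψ.comp Φ = MonoidHom.id _ := by rw [hΦχ]; exact hΨχ
  refine ⟨⟨⟨Φ, Ψ, fun g => ?_, fun g => ?_⟩, Φ.map_mul⟩, ?_, ?_⟩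
  · show Ψ (Φ g) = g
    rw [← MonoidHom.comp_apply, hΨΦ]; rfl
  · show Φ (Ψ g) = g
    rw [← MonoidHom.comp_apply, hΦΨ]; rfl
  · show Φ (Xg z) * _ ∈ _
    rw [hΦ1, zpow_zero, one_mul]
    rw [show (Xg z ^ (M 0 0) * Yg z ^ (M 0 1)) *
      ((PresentedGroup.of (rels := torusBundleRels z) 1) ^ (M 0 0) *
        (PresentedGroup.of (rels := torusBundleRels z) 2) ^ (M 0 1))⁻¹ = 1 from
      mul_inv_cancel _]
    exact Subgroup.one_mem _
  · show Φ (Yg z) * _ ∈ _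
    rw [hΦ2, zpow_zero, one_mul]
    rw [show (Xg z ^ (M 1 0) * Yg z ^ (M 1 1)) *
      ((PresentedGroup.of (rels := torusBundleRels z) 1) ^ (M 1 0) *
        (PresentedGroup.of (rels := torusBundleRels z) 2) ^ (M 1 1))⁻¹ = 1 from
      mul_inv_cancel _]
    exact Subgroup.one_mem _
end

section
/- Let π be an infinite group with H¹(π; Zπ) = 0. Then the restriction map Hom_{Zπ}(Zπ, Zπ) → Hom_{Zπ}(Iπ, Zπ) induced by the inclusion Iπ ⊂ Zπ is an isomorphism; consequently the dual module Iπ* = Hom_{Zπ}(Iπ, Zπ) is a free Zπ-module of rank one. -/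
/-- The augmentation ring homomorphism `ℤπ → ℤ`. -/
noncomputable def aug (π : Type) [Group π] : MonoidAlgebra ℤ π →+* ℤ :=
  ((MonoidAlgebra.lift ℤ ℤ π) 1).toRingHom

/-- The augmentation ideal `Iπ = ker(ε : ℤπ → ℤ)`. -/
noncomputable def Ipi (π : Type) [Group π] : Ideal (MonoidAlgebra ℤ π) :=
  RingHom.ker (aug π)

/-- Right multiplication by `x ∈ ℤπ`, as a `ℤπ`-linear map `Iπ → ℤπ`. -/
noncomputable def rmul (π : Type) [Group π] (x : MonoidAlgebra ℤ π) :
    ↥(Ipi π) →ₗ[MonoidAlgebra ℤ π] MonoidAlgebra ℤ π where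
  toFun b := (b : MonoidAlgebra ℤ π) * x
  map_add' := by intro b b'; simp [add_mul]
  map_smul' := by intro r b; simp [smul_eq_mul, mul_assoc]

section aux
variable (π : Type) [Group π]

lemma aug_single (g : π) : aug π (MonoidAlgebra.single g 1) = 1 := by
  simp [aug, MonoidAlgebra.lift_single]

lemma mem_Ipi (g : π) : (MonoidAlgebra.single g 1 : MonoidAlgebra ℤ π) - 1 ∈ Ipi π := by
  simp [Ipi, RingHom.mem_ker, map_sub, aug_single]

noncomputable def eg (g : π) : ↥(Ipi π) := ⟨MonoidAlgebra.single g 1 - 1, mem_Ipi π g⟩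

lemma aug_eq_sum (b : MonoidAlgebra ℤ π) : aug π b = ∑ g ∈ b.coeff.support, b.coeff g := by
  simp [aug, MonoidAlgebra.lift_apply, Finsupp.sum]

lemma span_Ipi (b : ↥(Ipi π)) :
    b = ∑ g ∈ (b : MonoidAlgebra ℤ π).coeff.support, (b : MonoidAlgebra ℤ π).coeff g • eg π g := by
  apply Subtype.ext
  push_cast [eg]
  have h1 : ∑ g ∈ (b : MonoidAlgebra ℤ π).coeff.support,
      (b : MonoidAlgebra ℤ π).coeff g • (MonoidAlgebra.single g 1 : MonoidAlgebra ℤ π)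
      = (b : MonoidAlgebra ℤ π) := by
    conv_rhs => rw [← MonoidAlgebra.sum_coeff_single (b : MonoidAlgebra ℤ π), Finsupp.sum]
    refine Finset.sum_congr rfl fun g _ => ?_
    simp [MonoidAlgebra.smul_single]
  have hb0 : aug π (b : MonoidAlgebra ℤ π) = 0 := b.2
  rw [aug_eq_sum] at hb0
  symm
  calc ∑ g ∈ (b : MonoidAlgebra ℤ π).coeff.support,
        (b : MonoidAlgebra ℤ π).coeff g • ((MonoidAlgebra.single g 1 : MonoidAlgebra ℤ π) - 1)
      = (∑ g ∈ (b : MonoidAlgebra ℤ π).coeff.support,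
          (b : MonoidAlgebra ℤ π).coeff g • (MonoidAlgebra.single g 1 : MonoidAlgebra ℤ π))
        - (∑ g ∈ (b : MonoidAlgebra ℤ π).coeff.support, (b : MonoidAlgebra ℤ π).coeff g)
          • (1 : MonoidAlgebra ℤ π) := by
        rw [Finset.sum_smul, ← Finset.sum_sub_distrib]
        simp [smul_sub]
    _ = (b : MonoidAlgebra ℤ π) := by rw [h1, hb0]; simp

lemma ext_of_eg (φ ψ : ↥(Ipi π) →ₗ[MonoidAlgebra ℤ π] MonoidAlgebra ℤ π)
    (h : ∀ g : π, φ (eg π g) = ψ (eg π g)) : φ = ψ := by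
  refine LinearMap.ext fun b => ?_
  conv_lhs => rw [span_Ipi π b]
  conv_rhs => rw [span_Ipi π b]
  rw [map_sum, map_sum]
  exact Finset.sum_congr rfl fun g _ => by rw [map_zsmul, map_zsmul, h g]

lemma rho_eq (g : π) (v : MonoidAlgebra ℤ π) :
    (Representation.ofMulAction ℤ π π) g v = MonoidAlgebra.single g 1 * v := by
  ext c
  rw [Representation.coeff_ofMulAction, MonoidAlgebra.coeff_single_mul_apply]
  simp [smul_eq_mul]

lemma final (x : MonoidAlgebra ℤ π) (φ : ↥(Ipi π) →ₗ[MonoidAlgebra ℤ π] MonoidAlgebra ℤ π)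
    (hx : ∀ g : π, (Representation.ofMulAction ℤ π π) g x - x = φ (eg π g)) :
    rmul π x = φ := by
  refine ext_of_eg π (rmul π x) φ fun g => ?_
  have h2 := hx g
  rw [rho_eq π g x] at h2
  have h3 := sub_mul (MonoidAlgebra.single g 1) 1 x
  rw [one_mul] at h3
  exact h3.trans h2

end aux


/-- Let `π` be an infinite group with `H¹(π; ℤπ) = 0` (cohomology with coefficients
in the left regular representation).  Then the restriction map
`Hom_{ℤπ}(ℤπ, ℤπ) → Hom_{ℤπ}(Iπ, ℤπ)` along the inclusion `Iπ ⊂ ℤπ` is an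
isomorphism; consequently `Iπ* = Hom_{ℤπ}(Iπ, ℤπ)` is free of rank one:  every
element of `Iπ*` is of the form `b ↦ b·x` for a unique `x ∈ ℤπ`. -/
theorem restriction_dual_iso (π : Type) [Group π] [Infinite π]
    (hH1 : ∀ x y : groupCohomology (Rep.of (Representation.ofMulAction ℤ π π)) 1,
      x = y) :
    Function.Bijective
        (fun f : (MonoidAlgebra ℤ π →ₗ[MonoidAlgebra ℤ π] MonoidAlgebra ℤ π) =>
          f.comp (Ipi π).subtype)
    ∧ Function.Bijective (fun x : MonoidAlgebra ℤ π => rmul π x) := by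
  set A := Rep.of (Representation.ofMulAction ℤ π π) with hA
  -- injectivity of rmul
  have hinj : Function.Injective (fun x : MonoidAlgebra ℤ π => rmul π x) := by
    intro x y hxy
    have h : ∀ g : π, (MonoidAlgebra.single g 1 - 1 : MonoidAlgebra ℤ π) * x
        = (MonoidAlgebra.single g 1 - 1) * y := fun g =>
      congrArg (fun φ => φ (eg π g)) hxy
    set z := x - y with hz
    have hzz : ∀ g : π, MonoidAlgebra.single g 1 * z = z := by
      intro g
      have := h g
      simp only [sub_mul, one_mul] at this
      simp only [hz, mul_sub, sub_mul, one_mul]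
      abel_nf
      linear_combination (norm := abel) this
    have hz0 : z = 0 := by
      by_contra hne
      obtain ⟨a, ha⟩ : ∃ a, z.coeff a ≠ 0 := by
        by_contra hc
        push_neg at hc
        exact hne (MonoidAlgebra.coeff_injective (Finsupp.ext hc))
      have hall : ∀ h : π, z.coeff h ≠ 0 := by
        intro h0
        have := hzz (h0 * a⁻¹)
        have h2 : z.coeff h0 = z.coeff a := by
          conv_lhs => rw [← this]
          rw [MonoidAlgebra.coeff_single_mul_apply]
          simp
        rw [h2]; exact ha
      have huniv : (z.coeff.support : Set π) = Set.univ := by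
        ext h0; simp [Finsupp.mem_support_iff, hall h0]
      exact Set.infinite_univ (huniv ▸ z.coeff.support.finite_toSet)
    exact sub_eq_zero.1 hz0
  -- surjectivity of rmul
  have hsurj : Function.Surjective (fun x : MonoidAlgebra ℤ π => rmul π x) := by
    intro φ
    set c : π → MonoidAlgebra ℤ π := fun g => φ (eg π g) with hc
    have hcoc : c ∈ groupCohomology.cocycles₁ A := by
      rw [groupCohomology.mem_cocycles₁_iff]
      intro g h
      have key : eg π (g * h)
          = (MonoidAlgebra.single g 1 : MonoidAlgebra ℤ π) • eg π h + eg π g := by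
        apply Subtype.ext
        push_cast [eg]
        rw [smul_eq_mul, mul_sub, MonoidAlgebra.single_mul_single]
        simp
      have key2 : c (g * h) = MonoidAlgebra.single g 1 * c h + c g := by
        show φ (eg π (g * h)) = _
        rw [key, map_add, map_smul, smul_eq_mul]
      refine key2.trans ?_
      have h4 : (A.ρ g) (c h) = (Representation.ofMulAction ℤ π π) g (c h) := rfl
      rw [h4, rho_eq]
    have hbd : c ∈ groupCohomology.coboundaries₁ A :=
      (groupCohomology.H1π_eq_zero_iff (⟨c, hcoc⟩ : groupCohomology.cocycles₁ A)).1 (hH1 _ _)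
    obtain ⟨x, hx⟩ := hbd
    exact ⟨x, final π x φ fun g => by simpa using congrFun hx g⟩
  -- part one via evaluation at 1
  have e1 : ∀ f : MonoidAlgebra ℤ π →ₗ[MonoidAlgebra ℤ π] MonoidAlgebra ℤ π,
      f.comp (Ipi π).subtype = rmul π (f 1) := by
    intro f
    refine LinearMap.ext fun b => ?_
    show f (b : MonoidAlgebra ℤ π) = (b : MonoidAlgebra ℤ π) * f 1
    calc f (b : MonoidAlgebra ℤ π) = f ((b : MonoidAlgebra ℤ π) • 1) := by
          rw [smul_eq_mul, mul_one]
      _ = (b : MonoidAlgebra ℤ π) • f 1 := map_smul f _ _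
      _ = (b : MonoidAlgebra ℤ π) * f 1 := smul_eq_mul _ _
  have hev : Function.Bijective
      (fun f : MonoidAlgebra ℤ π →ₗ[MonoidAlgebra ℤ π] MonoidAlgebra ℤ π => f 1) := by
    constructor
    · intro f g hfg
      refine LinearMap.ext fun a => ?_
      calc f a = a • f 1 := by rw [← map_smul, smul_eq_mul, mul_one]
        _ = a • g 1 := by rw [show f 1 = g 1 from hfg]
        _ = g a := by rw [← map_smul, smul_eq_mul, mul_one]
    · intro x
      refine ⟨{ toFun := fun a => a * x,
                map_add' := fun a b => add_mul a b x,
                map_smul' := by intro r a; simp [smul_eq_mul, mul_assoc] }, ?_⟩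
      simp
  constructor
  · have : (fun f : MonoidAlgebra ℤ π →ₗ[MonoidAlgebra ℤ π] MonoidAlgebra ℤ π =>
        f.comp (Ipi π).subtype)
        = (fun x : MonoidAlgebra ℤ π => rmul π x) ∘ (fun f => f 1) := by
      funext f; exact e1 f
    rw [this]
    exact Function.Bijective.comp ⟨hinj, hsurj⟩ hev
  · exact ⟨hinj, hsurj⟩
end

section
/- Let π be a group, N a Zπ-module, F a finitely generated free Zπ-module, and (λ, μ) a quadratic form on N ⊕ F. Then λ is even if and only if the restriction of λ to N is even. -/
/-- The involution of the group ring `ℤπ` induced by `g ↦ g⁻¹`. -/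
def conjGR (π : Type) [Group π] (x : MonoidAlgebra ℤ π) : MonoidAlgebra ℤ π :=
  MonoidAlgebra.ofCoeff (Finsupp.equivMapDomain (Equiv.inv π) x.coeff)

/-- A pairing `λ : M × M → ℤπ` is sesquilinear if it is biadditive,
left `ℤπ`-linear in the first variable and conjugate-linear in the second. -/
def IsSesq (π : Type) [Group π] {M : Type} [AddCommGroup M]
    [Module (MonoidAlgebra ℤ π) M] (lam : M → M → MonoidAlgebra ℤ π) : Prop :=
  (∀ x x' y, lam (x + x') y = lam x y + lam x' y) ∧
  (∀ x y y', lam x (y + y') = lam x y + lam x y') ∧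
  (∀ (a : MonoidAlgebra ℤ π) (x y), lam (a • x) y = a * lam x y) ∧
  (∀ (a : MonoidAlgebra ℤ π) (x y), lam x (a • y) = lam x y * conjGR π a)

/-- A pairing is hermitian if `λ(x,y) = conj (λ(y,x))`. -/
def IsHermitian (π : Type) [Group π] {M : Type} [AddCommGroup M]
    [Module (MonoidAlgebra ℤ π) M] (lam : M → M → MonoidAlgebra ℤ π) : Prop :=
  ∀ x y, lam x y = conjGR π (lam y x)

/-- A hermitian form is even if `λ = q + q*` for some sesquilinear `q`. -/
def IsEvenForm (π : Type) [Group π] {M : Type} [AddCommGroup M]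
    [Module (MonoidAlgebra ℤ π) M] (lam : M → M → MonoidAlgebra ℤ π) : Prop :=
  ∃ q : M → M → MonoidAlgebra ℤ π, IsSesq π q ∧
    ∀ x y, lam x y = q x y + conjGR π (q y x)

/-- The additive subgroup of `ℤπ` generated by the elements `g - g⁻¹`; the target
of quadratic refinements is the quotient `ℤπ/{g - g⁻¹}`. -/
noncomputable def oddRel (π : Type) [Group π] : AddSubgroup (MonoidAlgebra ℤ π) :=
  AddSubgroup.closure
    {x | ∃ g : π, x = MonoidAlgebra.of ℤ π g - MonoidAlgebra.of ℤ π g⁻¹}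

/-- A quadratic refinement of `λ` is a map `μ : M → ℤπ/{g - g⁻¹}` (given here by
a lift `μ : M → ℤπ`, with the relevant identities holding modulo `{g - g⁻¹}`)
such that `λ(x,x) = μ(x) + conj μ(x)`, `μ(x+y) = μ(x) + μ(y) + [λ(x,y)]` and
`μ(a·x) = a·μ(x)·conj a`. -/
def HasQuadRef (π : Type) [Group π] {M : Type} [AddCommGroup M]
    [Module (MonoidAlgebra ℤ π) M] (lam : M → M → MonoidAlgebra ℤ π) : Prop :=
  ∃ μ : M → MonoidAlgebra ℤ π,
    (∀ x, lam x x = μ x + conjGR π (μ x)) ∧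
    (∀ x y, μ (x + y) - μ x - μ y - lam x y ∈ oddRel π) ∧
    (∀ (a : MonoidAlgebra ℤ π) (x), μ (a • x) - a * μ x * conjGR π a ∈ oddRel π)

section Aux

variable (π : Type) [Group π]

lemma conjGR_add (x y : MonoidAlgebra ℤ π) :
    conjGR π (x + y) = conjGR π x + conjGR π y := by
  ext a
  show (x + y).coeff a⁻¹ = x.coeff a⁻¹ + y.coeff a⁻¹
  exact Finsupp.add_apply x.coeff y.coeff a⁻¹

lemma conjGR_zero : conjGR π 0 = 0 := by
  ext a; simp [conjGR, Finsupp.equivMapDomain_apply, MonoidAlgebra.coeff_ofCoeff]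

lemma conjGR_conjGR (x : MonoidAlgebra ℤ π) :
    conjGR π (conjGR π x) = x := by
  ext a; simp [conjGR, Finsupp.equivMapDomain_apply, MonoidAlgebra.coeff_ofCoeff]

lemma conjGR_single (g : π) (r : ℤ) :
    conjGR π (MonoidAlgebra.single g r) = MonoidAlgebra.single g⁻¹ r := by
  simp [conjGR, MonoidAlgebra.coeff_single, Finsupp.equivMapDomain_single, MonoidAlgebra.ofCoeff_single]

lemma conjGR_sum {ι : Type*} (s : Finset ι) (f : ι → MonoidAlgebra ℤ π) :
    conjGR π (∑ i ∈ s, f i) = ∑ i ∈ s, conjGR π (f i) :=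
  map_sum (AddMonoidHom.mk' (conjGR π) (conjGR_add π)) f s

lemma conjGR_mul (x y : MonoidAlgebra ℤ π) :
    conjGR π (x * y) = conjGR π y * conjGR π x := by
  induction x using MonoidAlgebra.induction_linear with
  | zero => simp [conjGR_zero]
  | add a b ha hb => rw [add_mul, conjGR_add, ha, hb, conjGR_add, mul_add]
  | single g r =>
    induction y using MonoidAlgebra.induction_linear with
    | zero => simp [conjGR_zero]
    | add a b ha hb => rw [mul_add, conjGR_add, ha, hb, conjGR_add, add_mul]
    | single h s =>
      rw [MonoidAlgebra.single_mul_single, conjGR_single, conjGR_single, conjGR_single,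
        MonoidAlgebra.single_mul_single, mul_inv_rev, mul_comm]

variable {M : Type} [AddCommGroup M] [Module (MonoidAlgebra ℤ π) M]
  {lam : M → M → MonoidAlgebra ℤ π}

lemma sesq_sum_left (h : IsSesq π lam) {ι : Type*} (s : Finset ι) (v : ι → M) (y : M) :
    lam (∑ i ∈ s, v i) y = ∑ i ∈ s, lam (v i) y :=
  map_sum (AddMonoidHom.mk' (fun x => lam x y) (fun a b => h.1 a b y)) v s

lemma sesq_sum_right (h : IsSesq π lam) {ι : Type*} (s : Finset ι) (x : M) (v : ι → M) :
    lam x (∑ i ∈ s, v i) = ∑ i ∈ s, lam x (v i) :=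
  map_sum (AddMonoidHom.mk' (fun y => lam x y) (fun a b => h.2.1 x a b)) v s

end Aux

theorem even_iff_restriction_even' (π : Type) [Group π]
    (N : Type) [AddCommGroup N] [Module (MonoidAlgebra ℤ π) N] (m : ℕ)
    (lam : (N × (Fin m → MonoidAlgebra ℤ π)) → (N × (Fin m → MonoidAlgebra ℤ π)) →
      MonoidAlgebra ℤ π)
    (hs : IsSesq π lam) (hh : IsHermitian π lam) (hq : HasQuadRef π lam) :
    IsEvenForm π lam ↔ IsEvenForm π (fun x y : N => lam (x, 0) (y, 0)) := by
  constructor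
  · rintro ⟨q, ⟨q1, q2, q3, q4⟩, hqe⟩
    have k1 : ∀ x x' y : N, q ((x + x' : N), (0 : Fin m → MonoidAlgebra ℤ π)) (y, 0)
        = q (x, 0) (y, 0) + q (x', 0) (y, 0) := by
      intro x x' y
      have h1 : ((x + x' : N), (0 : Fin m → MonoidAlgebra ℤ π)) = (x, 0) + (x', 0) := by
        rw [Prod.mk_add_mk, add_zero]
      rw [h1, q1]
    have k2 : ∀ x y y' : N, q (x, (0 : Fin m → MonoidAlgebra ℤ π)) ((y + y' : N), 0)
        = q (x, 0) (y, 0) + q (x, 0) (y', 0) := by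
      intro x y y'
      have h1 : ((y + y' : N), (0 : Fin m → MonoidAlgebra ℤ π)) = (y, 0) + (y', 0) := by
        rw [Prod.mk_add_mk, add_zero]
      rw [h1, q2]
    have k3 : ∀ (a : MonoidAlgebra ℤ π) (x y : N),
        q ((a • x : N), (0 : Fin m → MonoidAlgebra ℤ π)) (y, 0) = a * q (x, 0) (y, 0) := by
      intro a x y
      have h1 : ((a • x : N), (0 : Fin m → MonoidAlgebra ℤ π)) = a • (x, 0) := by
        rw [Prod.smul_mk, smul_zero]
      rw [h1, q3]
    have k4 : ∀ (a : MonoidAlgebra ℤ π) (x y : N),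
        q (x, (0 : Fin m → MonoidAlgebra ℤ π)) ((a • y : N), 0)
        = q (x, 0) (y, 0) * conjGR π a := by
      intro a x y
      have h1 : ((a • y : N), (0 : Fin m → MonoidAlgebra ℤ π)) = a • (y, 0) := by
        rw [Prod.smul_mk, smul_zero]
      rw [h1, q4]
    exact ⟨fun x y => q (x, 0) (y, 0), ⟨k1, k2, k3, k4⟩, fun x y => hqe (x, 0) (y, 0)⟩
  · rintro ⟨q0, ⟨q01, q02, q03, q04⟩, hq0⟩
    have hq0' : ∀ x y : N, lam (x, 0) (y, 0) = q0 x y + conjGR π (q0 y x) := hq0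
    obtain ⟨μ, hμ1, -, -⟩ := hq
    set e : Fin m → (Fin m → MonoidAlgebra ℤ π) := fun i => Pi.single i 1 with he
    set c : Fin m → Fin m → MonoidAlgebra ℤ π := fun i j =>
      if i < j then lam (0, e i) (0, e j) else if i = j then μ (0, e i) else 0 with hc0
    set Q : (Fin m → MonoidAlgebra ℤ π) → (Fin m → MonoidAlgebra ℤ π) → MonoidAlgebra ℤ π :=
      fun f g => ∑ i, ∑ j, f i * c i j * conjGR π (g j) with hQ0
    -- the key diagonal/triangular identity
    have hc : ∀ i j, c i j + conjGR π (c j i) = lam ((0 : N), e i) (0, e j) := by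
      intro i j
      rcases lt_trichotomy i j with hij | hij | hij
      · have h1 : c i j = lam ((0 : N), e i) (0, e j) := by simp [hc0, hij]
        have h2 : c j i = 0 := by simp [hc0, not_lt_of_gt hij, (ne_of_gt hij)]
        rw [h1, h2, conjGR_zero, add_zero]
      · subst hij
        have h1 : c i i = μ ((0 : N), e i) := by simp [hc0]
        rw [h1]
        exact (hμ1 _).symm
      · have h1 : c i j = 0 := by simp [hc0, not_lt_of_gt hij, (ne_of_gt hij)]
        have h2 : c j i = lam ((0 : N), e j) (0, e i) := by simp [hc0, hij]
        rw [h1, h2, zero_add, ← hh]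
    -- decomposition of vectors in the free part
    have hdec : ∀ f : Fin m → MonoidAlgebra ℤ π,
        ((0 : N), f) = ∑ i, (f i) • ((0 : N), e i) := by
      intro f
      refine Prod.ext ?_ ?_
      · rw [Prod.fst_sum]; simp
      · rw [Prod.snd_sum]
        simp only [Prod.smul_snd]
        funext k
        rw [Finset.sum_apply]
        simp only [Pi.smul_apply, he, Pi.single_apply, smul_eq_mul, mul_ite, mul_one, mul_zero]
        simp
    have hlamF : ∀ f g : Fin m → MonoidAlgebra ℤ π, lam ((0 : N), f) ((0 : N), g) =
        ∑ i, ∑ j, f i * lam ((0 : N), e i) ((0 : N), e j) * conjGR π (g j) := by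
      intro f g
      conv_lhs => rw [hdec f, hdec g]
      rw [sesq_sum_left π hs]
      refine Finset.sum_congr rfl fun i _ => ?_
      rw [sesq_sum_right π hs]
      refine Finset.sum_congr rfl fun j _ => ?_
      rw [hs.2.2.1, hs.2.2.2, mul_assoc]
    have hQlam : ∀ f g : Fin m → MonoidAlgebra ℤ π,
        Q f g + conjGR π (Q g f) = lam ((0 : N), f) ((0 : N), g) := by
      intro f g
      rw [hlamF f g, hQ0]
      simp only [conjGR_sum]
      rw [Finset.sum_comm (f := fun i j => conjGR π (g i * c i j * conjGR π (f j)))]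
      rw [← Finset.sum_add_distrib]
      refine Finset.sum_congr rfl fun i _ => ?_
      rw [← Finset.sum_add_distrib]
      refine Finset.sum_congr rfl fun j _ => ?_
      rw [conjGR_mul, conjGR_mul, conjGR_conjGR, ← mul_assoc, mul_assoc (f i),
        mul_assoc (f i), ← mul_add, ← add_mul, hc, ← mul_assoc]
    have key1 : ∀ x x' y : N × (Fin m → MonoidAlgebra ℤ π),
        q0 (x + x').1 y.1 + lam ((x + x').1, 0) (0, y.2) + Q (x + x').2 y.2
        = (q0 x.1 y.1 + lam (x.1, 0) (0, y.2) + Q x.2 y.2)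
          + (q0 x'.1 y.1 + lam (x'.1, 0) (0, y.2) + Q x'.2 y.2) := by
      intro x x' y
      simp only [Prod.fst_add, Prod.snd_add]
      have h1 : ((x.1 + x'.1 : N), (0 : Fin m → MonoidAlgebra ℤ π)) = (x.1, 0) + (x'.1, 0) := by
        rw [Prod.mk_add_mk, add_zero]
      have h2 : Q (x.2 + x'.2) y.2 = Q x.2 y.2 + Q x'.2 y.2 := by
        rw [hQ0]
        simp only [Pi.add_apply, add_mul, Finset.sum_add_distrib]
      rw [q01, h1, hs.1, h2]; abel
    have key2 : ∀ x y y' : N × (Fin m → MonoidAlgebra ℤ π),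
        q0 x.1 (y + y').1 + lam (x.1, 0) (0, (y + y').2) + Q x.2 (y + y').2
        = (q0 x.1 y.1 + lam (x.1, 0) (0, y.2) + Q x.2 y.2)
          + (q0 x.1 y'.1 + lam (x.1, 0) (0, y'.2) + Q x.2 y'.2) := by
      intro x y y'
      simp only [Prod.fst_add, Prod.snd_add]
      have h1 : ((0 : N), y.2 + y'.2) = ((0 : N), y.2) + ((0 : N), y'.2) := by
        rw [Prod.mk_add_mk, add_zero]
      have h2 : Q x.2 (y.2 + y'.2) = Q x.2 y.2 + Q x.2 y'.2 := by
        rw [hQ0]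
        simp only [Pi.add_apply, conjGR_add, mul_add, Finset.sum_add_distrib]
      rw [q02, h1, hs.2.1, h2]; abel
    have key3 : ∀ (a : MonoidAlgebra ℤ π) (x y : N × (Fin m → MonoidAlgebra ℤ π)),
        q0 (a • x).1 y.1 + lam ((a • x).1, 0) (0, y.2) + Q (a • x).2 y.2
        = a * (q0 x.1 y.1 + lam (x.1, 0) (0, y.2) + Q x.2 y.2) := by
      intro a x y
      simp only [Prod.smul_fst, Prod.smul_snd]
      have h1 : ((a • x.1 : N), (0 : Fin m → MonoidAlgebra ℤ π)) = a • (x.1, (0 : Fin m → MonoidAlgebra ℤ π)) := by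
        rw [Prod.smul_mk, smul_zero]
      have h2 : Q (a • x.2) y.2 = a * Q x.2 y.2 := by
        rw [hQ0]
        simp only [Pi.smul_apply, smul_eq_mul, Finset.mul_sum, mul_assoc]
      rw [q03, h1, hs.2.2.1, h2, mul_add, mul_add]
    have key4 : ∀ (a : MonoidAlgebra ℤ π) (x y : N × (Fin m → MonoidAlgebra ℤ π)),
        q0 x.1 (a • y).1 + lam (x.1, 0) (0, (a • y).2) + Q x.2 (a • y).2
        = (q0 x.1 y.1 + lam (x.1, 0) (0, y.2) + Q x.2 y.2) * conjGR π a := by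
      intro a x y
      simp only [Prod.smul_fst, Prod.smul_snd]
      have h1 : ((0 : N), a • y.2) = a • ((0 : N), y.2) := by
        rw [Prod.smul_mk, smul_zero]
      have h2 : Q x.2 (a • y.2) = Q x.2 y.2 * conjGR π a := by
        rw [hQ0]
        simp only [Pi.smul_apply, smul_eq_mul, conjGR_mul, Finset.sum_mul, mul_assoc]
      rw [q04, h1, hs.2.2.2, h2, add_mul, add_mul]
    have key5 : ∀ x y : N × (Fin m → MonoidAlgebra ℤ π),
        lam x y = (q0 x.1 y.1 + lam (x.1, 0) (0, y.2) + Q x.2 y.2)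
          + conjGR π (q0 y.1 x.1 + lam (y.1, 0) (0, x.2) + Q y.2 x.2) := by
      intro x y
      have hx : x = (x.1, (0 : Fin m → MonoidAlgebra ℤ π)) + ((0 : N), x.2) := by
        rw [Prod.mk_add_mk, add_zero, zero_add]
      have hy : y = (y.1, (0 : Fin m → MonoidAlgebra ℤ π)) + ((0 : N), y.2) := by
        rw [Prod.mk_add_mk, add_zero, zero_add]
      have h1 : lam (x.1, (0 : Fin m → MonoidAlgebra ℤ π)) (y.1, 0)
          = q0 x.1 y.1 + conjGR π (q0 y.1 x.1) := hq0' x.1 y.1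
      have h2 : lam ((0 : N), x.2) (y.1, (0 : Fin m → MonoidAlgebra ℤ π))
          = conjGR π (lam (y.1, 0) ((0 : N), x.2)) := hh _ _
      have h3 : lam ((0 : N), x.2) ((0 : N), y.2)
          = Q x.2 y.2 + conjGR π (Q y.2 x.2) := (hQlam _ _).symm
      calc lam x y
          = lam ((x.1, 0) + ((0 : N), x.2)) ((y.1, 0) + ((0 : N), y.2)) := by
            rw [← hx, ← hy]
        _ = lam (x.1, 0) (y.1, 0) + lam (x.1, 0) ((0 : N), y.2)
            + (lam ((0 : N), x.2) (y.1, 0) + lam ((0 : N), x.2) ((0 : N), y.2)) := by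
            rw [hs.1, hs.2.1, hs.2.1]
        _ = q0 x.1 y.1 + lam (x.1, 0) (0, y.2) + Q x.2 y.2
            + conjGR π (q0 y.1 x.1 + lam (y.1, 0) (0, x.2) + Q y.2 x.2) := by
            rw [h1, h2, h3, conjGR_add, conjGR_add]; abel
    exact ⟨fun x y => q0 x.1 y.1 + lam (x.1, 0) (0, y.2) + Q x.2 y.2,
      ⟨key1, key2, key3, key4⟩, key5⟩


/-- For a quadratic form `(λ, μ)` on `N ⊕ F` with `F` finitely generated free,
`λ` is even if and only if its restriction to `N` is even. -/
theorem even_iff_restriction_even (π : Type) [Group π]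
    (N : Type) [AddCommGroup N] [Module (MonoidAlgebra ℤ π) N] (m : ℕ)
    (lam : (N × (Fin m → MonoidAlgebra ℤ π)) → (N × (Fin m → MonoidAlgebra ℤ π)) →
      MonoidAlgebra ℤ π)
    (hs : IsSesq π lam) (hh : IsHermitian π lam) (hq : HasQuadRef π lam) :
    IsEvenForm π lam ↔ IsEvenForm π (fun x y : N => lam (x, 0) (y, 0)) :=
  even_iff_restriction_even' π N m lam hs hh hq
end
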